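/- The functions u1(t) = (1/3)ln(10800/|t-t0|⁹), u2(t) = (1/2)ln(40/|t-t0|⁴), u3(t) = (1/6)ln(5/2) satisfy the diagonalized BKL equations ü1 = (1/3)e^{2(u1-u2-u3)}, ü2 = e^{2(u1-u2-u3)} - e^{u2}cosh(3u3), ü3 = (1/3)e^{2(u1-u2-u3)} - e^{u2}sinh(3u3), and the constraint 3u̇1² - u̇2² - 3u̇3² = e^{2(u1-u2-u3)} + 2e^{u2}cosh(3u3), for all t ≠ t0. -/

import Mathlib

lemma bkl_deriv_helper (t0 c a t : ℝ) (ht : t ≠ t0) (u : ℝ → ℝ)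
    (hu : ∀ x, x ≠ t0 → u x = c + a * Real.log (x - t0)) :
    deriv u t = a / (t - t0) ∧ deriv (deriv u) t = -a / (t - t0) ^ 2 := by
  have hopen : IsOpen {x : ℝ | x ≠ t0} := isOpen_ne
  have hmem : {x : ℝ | x ≠ t0} ∈ nhds t := hopen.mem_nhds ht
  set f : ℝ → ℝ := fun x => c + a * Real.log (x - t0) with hf
  have hev : u =ᶠ[nhds t] f := Filter.eventually_of_mem hmem (fun x hx => hu x hx)
  have hdf : ∀ x : ℝ, x ≠ t0 → HasDerivAt f (a / (x - t0)) x := by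
    intro x hx
    have h1 : HasDerivAt (fun y : ℝ => y - t0) 1 x := (hasDerivAt_id x).sub_const t0
    have h2 := (Real.hasDerivAt_log (sub_ne_zero.mpr hx)).comp x h1
    have h3 := (h2.const_mul a).const_add c
    simpa [hf, div_eq_mul_inv, Function.comp] using h3
  have hderiv_f : ∀ x : ℝ, x ≠ t0 → deriv f x = a / (x - t0) := fun x hx => (hdf x hx).deriv
  have h1 : deriv u t = a / (t - t0) := by
    rw [hev.deriv_eq, hderiv_f t ht]
  refine ⟨h1, ?_⟩
  have hev2 : deriv u =ᶠ[nhds t] (fun x => a / (x - t0)) := by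
    refine (hev.deriv).trans ?_
    exact Filter.eventually_of_mem hmem (fun x hx => hderiv_f x hx)
  rw [hev2.deriv_eq]
  have hinv : HasDerivAt (fun x : ℝ => a / (x - t0)) (-a / (t - t0)^2) t := by
    have h1 : HasDerivAt (fun y : ℝ => y - t0) 1 t := (hasDerivAt_id t).sub_const t0
    have h2 := (h1.inv (sub_ne_zero.mpr ht)).const_mul a
    have : a * -(1 / (t - t0) ^ 2) = -a / (t - t0) ^ 2 := by ring
    simpa [div_eq_mul_inv, this] using h2
  exact hinv.deriv

/-- The exact solution in the diagonal variables:
`u1 = (1/3)ln(10800/|t-t0|⁹)`, `u2 = (1/2)ln(40/|t-t0|⁴)`, `u3 = (1/6)ln(5/2)`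
satisfies the diagonalised BKL equations and the constraint for all `t ≠ t0`. -/
theorem bkl_exact_solution_diagonal (t0 : ℝ) (u1 u2 u3 : ℝ → ℝ)
    (hu1 : ∀ t, u1 t = (1/3) * Real.log (10800 / |t - t0| ^ 9))
    (hu2 : ∀ t, u2 t = (1/2) * Real.log (40 / |t - t0| ^ 4))
    (hu3 : ∀ t, u3 t = (1/6) * Real.log (5/2)) :
    ∀ t ≠ t0,
      deriv (deriv u1) t = (1/3) * Real.exp (2 * (u1 t - u2 t - u3 t)) ∧
      deriv (deriv u2) t =
        Real.exp (2 * (u1 t - u2 t - u3 t)) - Real.exp (u2 t) * Real.cosh (3 * u3 t) ∧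
      deriv (deriv u3) t =
        (1/3) * Real.exp (2 * (u1 t - u2 t - u3 t)) - Real.exp (u2 t) * Real.sinh (3 * u3 t) ∧
      3 * (deriv u1 t) ^ 2 - (deriv u2 t) ^ 2 - 3 * (deriv u3 t) ^ 2 =
        Real.exp (2 * (u1 t - u2 t - u3 t)) + 2 * Real.exp (u2 t) * Real.cosh (3 * u3 t) := by
  intro t ht
  have hs0 : t - t0 ≠ 0 := sub_ne_zero.mpr ht
  have hA : (0:ℝ) < |t - t0| := abs_pos.mpr hs0
  have hA0 : |t - t0| ≠ 0 := ne_of_gt hA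
  have hs2 : (0:ℝ) < (t - t0) ^ 2 := by positivity
  -- log expansions
  have l10800 : Real.log (10800 / |t - t0| ^ 9) =
      4 * Real.log 2 + 3 * Real.log 3 + 2 * Real.log 5 - 9 * Real.log (t - t0) := by
    rw [Real.log_div (by norm_num) (pow_ne_zero _ hA0), Real.log_pow, Real.log_abs,
      show (10800:ℝ) = 2^4 * 3^3 * 5^2 by norm_num,
      Real.log_mul (by positivity) (by positivity),
      Real.log_mul (by positivity) (by positivity),
      Real.log_pow, Real.log_pow, Real.log_pow]
    push_cast; ring
  have l40 : Real.log (40 / |t - t0| ^ 4) =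
      3 * Real.log 2 + Real.log 5 - 4 * Real.log (t - t0) := by
    rw [Real.log_div (by norm_num) (pow_ne_zero _ hA0), Real.log_pow, Real.log_abs,
      show (40:ℝ) = 2^3 * 5 by norm_num,
      Real.log_mul (by positivity) (by positivity), Real.log_pow]
    push_cast; ring
  have l52 : Real.log ((5:ℝ)/2) = Real.log 5 - Real.log 2 :=
    Real.log_div (by norm_num) (by norm_num)
  have lgen : ∀ c : ℝ, 0 < c → Real.log (c / (t - t0) ^ 2) =
      Real.log c - 2 * Real.log (t - t0) := by
    intro c hc
    rw [Real.log_div (ne_of_gt hc) (ne_of_gt hs2), Real.log_pow]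
    push_cast; ring
  -- exponential identities
  have E1 : Real.exp (2 * (u1 t - u2 t - u3 t)) = 9 / (t - t0) ^ 2 := by
    rw [hu1, hu2, hu3]
    rw [show 2 * ((1/3) * Real.log (10800 / |t - t0| ^ 9) -
        (1/2) * Real.log (40 / |t - t0| ^ 4) - (1/6) * Real.log (5/2)) =
        Real.log (9 / (t - t0) ^ 2) by
      rw [l10800, l40, l52, lgen 9 (by norm_num),
        show (9:ℝ) = 3^2 by norm_num, Real.log_pow]
      push_cast; ring]
    exact Real.exp_log (by positivity)
  have E2 : Real.exp (u2 t + 3 * u3 t) = 10 / (t - t0) ^ 2 := by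
    rw [hu2, hu3]
    rw [show (1/2) * Real.log (40 / |t - t0| ^ 4) + 3 * ((1/6) * Real.log (5/2)) =
        Real.log (10 / (t - t0) ^ 2) by
      rw [l40, l52, lgen 10 (by norm_num),
        show (10:ℝ) = 2 * 5 by norm_num, Real.log_mul (by norm_num) (by norm_num)]
      ring]
    exact Real.exp_log (by positivity)
  have E3 : Real.exp (u2 t - 3 * u3 t) = 4 / (t - t0) ^ 2 := by
    rw [hu2, hu3]
    rw [show (1/2) * Real.log (40 / |t - t0| ^ 4) - 3 * ((1/6) * Real.log (5/2)) =
        Real.log (4 / (t - t0) ^ 2) by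
      rw [l40, l52, lgen 4 (by norm_num),
        show (4:ℝ) = 2^2 by norm_num, Real.log_pow]
      push_cast; ring]
    exact Real.exp_log (by positivity)
  have Ecosh : Real.exp (u2 t) * Real.cosh (3 * u3 t) = 7 / (t - t0) ^ 2 := by
    rw [Real.cosh_eq]
    have h1 : Real.exp (u2 t) * Real.exp (3 * u3 t) = 10 / (t - t0) ^ 2 := by
      rw [← Real.exp_add]; exact E2
    have h2 : Real.exp (u2 t) * Real.exp (-(3 * u3 t)) = 4 / (t - t0) ^ 2 := by
      rw [← Real.exp_add, ← sub_eq_add_neg]; exact E3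
    linear_combination (h1 + h2) / 2
  have Esinh : Real.exp (u2 t) * Real.sinh (3 * u3 t) = 3 / (t - t0) ^ 2 := by
    rw [Real.sinh_eq]
    have h1 : Real.exp (u2 t) * Real.exp (3 * u3 t) = 10 / (t - t0) ^ 2 := by
      rw [← Real.exp_add]; exact E2
    have h2 : Real.exp (u2 t) * Real.exp (-(3 * u3 t)) = 4 / (t - t0) ^ 2 := by
      rw [← Real.exp_add, ← sub_eq_add_neg]; exact E3
    linear_combination (h1 - h2) / 2
  -- derivatives
  have D1 := bkl_deriv_helper t0 ((1/3) * Real.log 10800) (-3) t ht u1 (by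
    intro x hx
    have hx0 : x - t0 ≠ 0 := sub_ne_zero.mpr hx
    rw [hu1, Real.log_div (by norm_num) (pow_ne_zero _ (abs_ne_zero.mpr hx0)),
      Real.log_pow, Real.log_abs]
    push_cast; ring)
  have D2 := bkl_deriv_helper t0 ((1/2) * Real.log 40) (-2) t ht u2 (by
    intro x hx
    have hx0 : x - t0 ≠ 0 := sub_ne_zero.mpr hx
    rw [hu2, Real.log_div (by norm_num) (pow_ne_zero _ (abs_ne_zero.mpr hx0)),
      Real.log_pow, Real.log_abs]
    push_cast; ring)
  have D3 := bkl_deriv_helper t0 ((1/6) * Real.log (5/2)) 0 t ht u3 (by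
    intro x hx; rw [hu3]; ring)
  obtain ⟨D1a, D1b⟩ := D1
  obtain ⟨D2a, D2b⟩ := D2
  obtain ⟨D3a, D3b⟩ := D3
  refine ⟨?_, ?_, ?_, ?_⟩
  · rw [D1b, E1]; field_simp; ring
  · rw [D2b, E1, Ecosh]; field_simp; ring
  · rw [D3b, E1, Esinh]; ring
  · rw [D1a, D2a, D3a, E1, mul_assoc 2, Ecosh]; field_simp; ring
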